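/- The efficient-influence-function candidate has mean zero under ACCMV: with m_{r,0}(x_r) = E[f(L) | X_r = x_r, R ≥ r, A = 1] and O_r(x_r) = P(R = r, A = 0 | X_r = x_r)/P(R ≥ r, A = 1 | X_r = x_r), the random variable (f(L) − m_{r,0}(X_r)) O_r(X_r) I(R ≥ r, A = 1) + m_{r,0}(X_r) I(R = r, A = 0) − θ_{0,r} has expectation zero, where θ_{0,r} = E[f(L) I(R = r, A = 0)]. -/

import Mathlib

open MeasureTheory Set

/-- **The efficient influence function candidate has mean zero under ACCMV
(single primary variable, Theorem 3).**
With the true outcome regression `m_{r,0}(x_r) = E[f(L) | X_r = x_r, R ≥ r, A = 1]`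
and the true odds `O_r(x_r) = P(R = r, A = 0 | X_r)/P(R ≥ r, A = 1 | X_r)`
(ACCMV in odds form), the random variable
`(f(L) − m_{r,0}(X_r)) O_r(X_r) I(R ≥ r, A = 1) + m_{r,0}(X_r) I(R = r, A = 0) − θ_{0,r}`
has expectation zero, where `θ_{0,r} = E[f(L) I(R = r, A = 0)]`. -/
theorem accmv_eif_mean_zero_single
    {Ω : Type*} [MeasurableSpace Ω] (μ : Measure Ω) [IsProbabilityMeasure μ]
    {p : ℕ} (X : Ω → Fin p → ℝ) (L : Ω → ℝ) (R : Ω → Fin p → Bool) (A : Ω → Bool)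
    (hX : Measurable X) (hL : Measurable L) (hR : Measurable R) (hA : Measurable A)
    (r : Fin p → Bool)
    (f : ℝ → ℝ) (hf : Measurable f)
    (O : ({i : Fin p // r i = true} → ℝ) → ℝ) (hO : Measurable O)
    (M : ({i : Fin p // r i = true} → ℝ) → ℝ) (hM : Measurable M)
    -- observed subvector
    (Xr : Ω → {i : Fin p // r i = true} → ℝ) (hXr : Xr = fun ω i => X ω i.1)
    -- indicators
    (I0 : Ω → ℝ)
    (hI0 : I0 = ({ω | R ω = r ∧ A ω = false} : Set Ω).indicator fun _ => (1 : ℝ))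
    (I1 : Ω → ℝ)
    (hI1 : I1 = ({ω | (∀ i, r i = true → R ω i = true) ∧ A ω = true} : Set Ω).indicator
      fun _ => (1 : ℝ))
    -- σ-algebras generated by `(X_r, L)` and by `X_r`
    (mXL : MeasurableSpace Ω)
    (hmXL : mXL = MeasurableSpace.comap (fun ω => (Xr ω, L ω)) inferInstance)
    (mXr : MeasurableSpace Ω)
    (hmXr : mXr = MeasurableSpace.comap Xr inferInstance)
    -- ACCMV in odds form with the true odds `O = O_r`
    (haccmv : μ[I0 | mXL] =ᵐ[μ] fun ω => O (Xr ω) * (μ[I1 | mXL]) ω)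
    -- `M = m_{r,0}` is the true outcome regression
    (hMdef : (fun ω => M (Xr ω) * (μ[I1 | mXr]) ω)
      =ᵐ[μ] μ[fun ω => f (L ω) * I1 ω | mXr])
    -- the target parameter θ_{0,r}
    (θ : ℝ) (hθ : θ = ∫ ω, f (L ω) * I0 ω ∂μ)
    -- integrability
    (hint0 : Integrable (fun ω => f (L ω) * I0 ω) μ)
    (hintEIF : Integrable (fun ω =>
      (f (L ω) - M (Xr ω)) * O (Xr ω) * I1 ω + M (Xr ω) * I0 ω - θ) μ)
    (hint1 : Integrable (fun ω => f (L ω) * O (Xr ω) * I1 ω) μ)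
    (hint2 : Integrable (fun ω => M (Xr ω) * O (Xr ω) * I1 ω) μ)
    (hint3 : Integrable (fun ω => M (Xr ω) * I0 ω) μ) :
    ∫ ω, ((f (L ω) - M (Xr ω)) * O (Xr ω) * I1 ω + M (Xr ω) * I0 ω - θ) ∂μ = 0 := by
  rename_i m0 _
  letI : MeasurableSpace Ω := m0
  -- measurability of the conditioning map and sub-σ-algebra facts
  have hXrm : Measurable[m0] Xr := by
    subst hXr
    refine measurable_pi_iff.mpr fun i => ?_
    exact (measurable_pi_apply i.1).comp hX
  have hmle : mXL ≤ m0 := by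
    rw [hmXL]; exact (hXrm.prodMk hL).comap_le
  have hphi : Measurable[mXL] (fun ω => (Xr ω, L ω)) := by
    rw [hmXL]; exact measurable_iff_comap_le.mpr le_rfl
  have hLm : StronglyMeasurable[mXL] (fun ω => f (L ω)) :=
    ((hf.comp measurable_snd).comp hphi).stronglyMeasurable
  have hMm : StronglyMeasurable[mXL] (fun ω => M (Xr ω)) :=
    ((hM.comp measurable_fst).comp hphi).stronglyMeasurable
  have hOm : StronglyMeasurable[mXL] (fun ω => O (Xr ω)) :=
    ((hO.comp measurable_fst).comp hphi).stronglyMeasurable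
  -- indicators are integrable
  have hS0 : MeasurableSet[m0] {ω | R ω = r ∧ A ω = false} :=
    (hR (measurableSet_singleton r)).inter (hA (measurableSet_singleton false))
  have hS1 : MeasurableSet[m0] {ω | (∀ i, r i = true → R ω i = true) ∧ A ω = true} := by
    refine MeasurableSet.inter ?_ (hA (measurableSet_singleton true))
    show MeasurableSet[m0] (R ⁻¹' {v | ∀ i, r i = true → v i = true})
    exact hR (Set.Finite.measurableSet (Set.toFinite _))
  have hI0int : Integrable I0 μ := by
    rw [hI0]
    exact (integrable_indicator_iff hS0).2 (integrable_const (1 : ℝ)).integrableOn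
  have hI1int : Integrable I1 μ := by
    rw [hI1]
    exact (integrable_indicator_iff hS1).2 (integrable_const (1 : ℝ)).integrableOn
  -- key lemma: transfer integrals against I0 to integrals against O·I1
  have key : ∀ g : Ω → ℝ, StronglyMeasurable[mXL] g →
      Integrable (fun ω => g ω * I0 ω) μ →
      Integrable (fun ω => g ω * O (Xr ω) * I1 ω) μ →
      ∫ ω, g ω * I0 ω ∂μ = ∫ ω, g ω * O (Xr ω) * I1 ω ∂μ := by
    intro g hg hgi0 hgi1
    have h1 : μ[(fun ω => g ω * I0 ω) | mXL] =ᵐ[μ] fun ω => g ω * (μ[I0 | mXL]) ω :=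
      condExp_mul_of_stronglyMeasurable_left hg hgi0 hI0int
    have hg' : StronglyMeasurable[mXL] (fun ω => g ω * O (Xr ω)) := hg.mul hOm
    have h2 : μ[(fun ω => g ω * O (Xr ω) * I1 ω) | mXL]
        =ᵐ[μ] fun ω => g ω * O (Xr ω) * (μ[I1 | mXL]) ω :=
      condExp_mul_of_stronglyMeasurable_left hg' hgi1 hI1int
    calc ∫ ω, g ω * I0 ω ∂μ = ∫ ω, (μ[(fun ω => g ω * I0 ω) | mXL]) ω ∂μ :=
          (integral_condExp hmle).symm
      _ = ∫ ω, (μ[(fun ω => g ω * O (Xr ω) * I1 ω) | mXL]) ω ∂μ := by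
          refine integral_congr_ae (h1.trans (.trans ?_ h2.symm))
          filter_upwards [haccmv] with ω hω
          rw [hω]; ring
      _ = ∫ ω, g ω * O (Xr ω) * I1 ω ∂μ := integral_condExp hmle
  have keyf : ∫ ω, f (L ω) * I0 ω ∂μ = ∫ ω, f (L ω) * O (Xr ω) * I1 ω ∂μ :=
    key _ hLm hint0 hint1
  have keyM : ∫ ω, M (Xr ω) * I0 ω ∂μ = ∫ ω, M (Xr ω) * O (Xr ω) * I1 ω ∂μ :=
    key _ hMm hint3 hint2
  have hsub : Integrable (fun ω =>
      f (L ω) * O (Xr ω) * I1 ω - M (Xr ω) * O (Xr ω) * I1 ω) μ := hint1.sub hint2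
  have hsum : Integrable (fun ω =>
      f (L ω) * O (Xr ω) * I1 ω - M (Xr ω) * O (Xr ω) * I1 ω + M (Xr ω) * I0 ω) μ :=
    hsub.add hint3
  have e1 : (fun ω => (f (L ω) - M (Xr ω)) * O (Xr ω) * I1 ω + M (Xr ω) * I0 ω - θ)
      = fun ω => (f (L ω) * O (Xr ω) * I1 ω - M (Xr ω) * O (Xr ω) * I1 ω
          + M (Xr ω) * I0 ω) - θ := funext fun ω => by ring
  rw [e1, integral_sub hsum (integrable_const θ), integral_add hsub hint3,
    integral_sub hint1 hint2, integral_const, probReal_univ, hθ, keyf, keyM, one_smul]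
  ring
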